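/- For n ≥ 4, the form (C · D) := (1/(n(n−3))) Σ_{i≠j} C_{ij} D_{ij} is a real inner product on the vector space of n×n real symmetric matrices with zero diagonal: it is bilinear, symmetric, satisfies (C · C) ≥ 0 for every such C, and (C · C) = 0 if and only if C is the zero matrix. Consequently the linear span H_n of all U-centered distance matrices of n-point samples, equipped with this form, is a finite-dimensional real inner product (hence Hilbert) space. -/

import Mathlib

/-- The U-centered matrix of an `n × n` real matrix `A`. -/
noncomputable def Ucenter {n : ℕ} (A : Matrix (Fin n) (Fin n) ℝ) :
    Matrix (Fin n) (Fin n) ℝ :=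
  Matrix.of fun i j =>
    if i = j then 0
    else A i j - (∑ l, A i l) / ((n : ℝ) - 2) - (∑ k, A k j) / ((n : ℝ) - 2)
      + (∑ k, ∑ l, A k l) / (((n : ℝ) - 1) * ((n : ℝ) - 2))

/-- The inner product `(C · D) = (1/(n(n−3))) Σ_{i≠j} C_ij D_ij`. -/
noncomputable def ipU {n : ℕ} (C D : Matrix (Fin n) (Fin n) ℝ) : ℝ :=
  (∑ i, ∑ j, if i = j then 0 else C i j * D i j) / ((n : ℝ) * ((n : ℝ) - 3))

/-- The linear span of all U-centered distance matrices of `n`-point samples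
in Euclidean spaces of all dimensions `p ≥ 1`. -/
noncomputable def Hn (n : ℕ) : Submodule ℝ (Matrix (Fin n) (Fin n) ℝ) :=
  Submodule.span ℝ {M | ∃ p : ℕ, 1 ≤ p ∧ ∃ x : Fin n → EuclideanSpace ℝ (Fin p),
    M = Ucenter (Matrix.of fun i j => dist (x i) (x j))}

/-- For `n ≥ 4`, `(C · D) = (1/(n(n−3))) Σ_{i≠j} C_ij D_ij` is a real inner product
on the symmetric zero-diagonal `n×n` matrices: bilinear, symmetric,
`(C·C) ≥ 0`, and `(C·C) = 0` iff `C = 0`; consequently the linear span `H_n` of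
U-centered distance matrices, equipped with this form, is a finite-dimensional
real inner product (hence Hilbert) space. -/
theorem ipU_inner_product_space (n : ℕ) (hn : 4 ≤ n) :
    (∀ C D : Matrix (Fin n) (Fin n) ℝ, ipU C D = ipU D C) ∧
    (∀ (c d : ℝ) (C C' D : Matrix (Fin n) (Fin n) ℝ),
      ipU (c • C + d • C') D = c * ipU C D + d * ipU C' D) ∧
    (∀ (c d : ℝ) (C D D' : Matrix (Fin n) (Fin n) ℝ),
      ipU C (c • D + d • D') = c * ipU C D + d * ipU C D') ∧
    (∀ C : Matrix (Fin n) (Fin n) ℝ, 0 ≤ ipU C C) ∧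
    (∀ C : Matrix (Fin n) (Fin n) ℝ, C.IsSymm → (∀ i, C i i = 0) →
      (ipU C C = 0 ↔ C = 0)) ∧
    FiniteDimensional ℝ (Hn n) := by
  have hpos : 0 < (n : ℝ) * ((n : ℝ) - 3) := by
    have : (4 : ℝ) ≤ (n : ℝ) := by exact_mod_cast hn
    nlinarith
  refine ⟨?_, ?_, ?_, ?_, ?_, ?_⟩
  · intro C D
    unfold ipU
    congr 1
    refine Finset.sum_congr rfl fun i _ => Finset.sum_congr rfl fun j _ => ?_
    split <;> ring
  · intro c d C C' D
    unfold ipU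
    have key : (∑ i, ∑ j, if i = j then 0 else (c • C + d • C') i j * D i j)
        = c * (∑ i, ∑ j, if i = j then 0 else C i j * D i j)
          + d * (∑ i, ∑ j, if i = j then 0 else C' i j * D i j) := by
      simp only [Finset.mul_sum]
      rw [← Finset.sum_add_distrib]
      refine Finset.sum_congr rfl fun i _ => ?_
      rw [← Finset.sum_add_distrib]
      refine Finset.sum_congr rfl fun j _ => ?_
      simp only [Matrix.add_apply, Matrix.smul_apply, smul_eq_mul]
      split <;> ring
    rw [key, add_div, mul_div_assoc, mul_div_assoc]
  · intro c d C D D'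
    unfold ipU
    have key : (∑ i, ∑ j, if i = j then 0 else C i j * (c • D + d • D') i j)
        = c * (∑ i, ∑ j, if i = j then 0 else C i j * D i j)
          + d * (∑ i, ∑ j, if i = j then 0 else C i j * D' i j) := by
      simp only [Finset.mul_sum]
      rw [← Finset.sum_add_distrib]
      refine Finset.sum_congr rfl fun i _ => ?_
      rw [← Finset.sum_add_distrib]
      refine Finset.sum_congr rfl fun j _ => ?_
      simp only [Matrix.add_apply, Matrix.smul_apply, smul_eq_mul]
      split <;> ring
    rw [key, add_div, mul_div_assoc, mul_div_assoc]
  · intro C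
    unfold ipU
    apply div_nonneg _ hpos.le
    apply Finset.sum_nonneg; intro i _
    apply Finset.sum_nonneg; intro j _
    split
    · exact le_refl _
    · exact mul_self_nonneg _
  · intro C hsymm hdiag
    constructor
    · intro h
      have hsum : (∑ i, ∑ j, if i = j then 0 else C i j * C i j) = 0 := by
        have := h
        unfold ipU at this
        exact (div_eq_zero_iff.mp this).resolve_right hpos.ne'
      have hall : ∀ i ∈ Finset.univ, ∀ j ∈ Finset.univ,
          (if i = j then (0:ℝ) else C i j * C i j) = 0 := by
        have h1 : ∀ i ∈ (Finset.univ : Finset (Fin n)),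
            (∑ j, if i = j then (0:ℝ) else C i j * C i j) = 0 := by
          apply (Finset.sum_eq_zero_iff_of_nonneg ?_).mp hsum
          intro i _
          apply Finset.sum_nonneg; intro j _
          split
          · exact le_refl _
          · exact mul_self_nonneg _
        intro i hi j hj
        revert j hj
        apply (Finset.sum_eq_zero_iff_of_nonneg ?_).mp (h1 i hi)
        intro j _
        split
        · exact le_refl _
        · exact mul_self_nonneg _
      ext i j
      by_cases hij : i = j
      · subst hij; simpa using hdiag i
      · have := hall i (Finset.mem_univ i) j (Finset.mem_univ j)
        rw [if_neg hij] at this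
        have := mul_self_eq_zero.mp this
        simpa using this
    · intro h; subst h
      unfold ipU
      simp
  · infer_instance
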